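/- Fix n, k ≥ 1 and let G_{n,k} be the graph on vertex set {1,...,n} with x ~ y whenever x ≠ y and a·x = b·y for some a, b ∈ {1,...,k}. The connected components of G_{n,k} are exactly the sets X_{n,k,s} = {x ∈ {1,...,n} : β_*(x) = s} for s ∈ S_k ∩ {1,...,n}, where β_*(x) is the largest divisor of x coprime to all primes ≤ k and S_k = {s : gcd(s, P_k) = 1}. -/

import Mathlib

/-- `betaStar k x` is the largest divisor of `x` coprime to all primes `≤ k`. -/
def betaStar (k x : ℕ) : ℕ :=
  ∏ p ∈ x.primeFactors.filter (fun p => k < p), p ^ x.factorization p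

/-- The product of all primes at most `k`. -/
def primesProduct (k : ℕ) : ℕ := ∏ p ∈ Finset.filter Nat.Prime (Finset.range (k + 1)), p

/-- The graph on `{1, …, n}` where `x ~ y` iff `x ≠ y` and `a*x = b*y`
for some `a, b ∈ {1, …, k}`. -/
def GMult (n k : ℕ) : SimpleGraph ℕ where
  Adj x y := x ≠ y ∧ x ∈ Finset.Icc 1 n ∧ y ∈ Finset.Icc 1 n ∧
    ∃ a b : ℕ, 1 ≤ a ∧ a ≤ k ∧ 1 ≤ b ∧ b ≤ k ∧ a * x = b * y
  symm := ⟨fun _ _ ⟨hxy, hx, hy, a, b, ha1, hak, hb1, hbk, hab⟩ =>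
    ⟨hxy.symm, hy, hx, b, a, hb1, hbk, ha1, hak, hab.symm⟩⟩
  loopless := ⟨fun _ ⟨hxx, _⟩ => hxx rfl⟩

lemma betaStar_dvd (k x : ℕ) : betaStar k x ∣ x := by
  rcases eq_or_ne x 0 with rfl | hx
  · exact dvd_zero _
  · conv_rhs => rw [← Nat.factorization_prod_pow_eq_self hx]
    rw [Finsupp.prod, Nat.support_factorization]
    exact Finset.prod_dvd_prod_of_subset _ _ _ (Finset.filter_subset _ _)

lemma betaStar_coprime (k x : ℕ) : Nat.Coprime (betaStar k x) (primesProduct k) := by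
  unfold betaStar primesProduct
  apply Nat.Coprime.prod_left
  intro p hp
  apply Nat.Coprime.prod_right
  intro q hq
  simp only [Finset.mem_filter, Finset.mem_range] at hq
  refine Nat.Coprime.pow_left _ ?_
  have hple := (Finset.mem_filter.mp hp).2
  exact (Nat.coprime_primes (Nat.prime_of_mem_primeFactors (Finset.mem_filter.mp hp).1)
    hq.2).mpr (by omega)

lemma betaStar_congr {k x y : ℕ} (hx : x ≠ 0) (hy : y ≠ 0)
    (h : ∀ p, k < p → x.factorization p = y.factorization p) :
    betaStar k x = betaStar k y := by
  unfold betaStar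
  have hset : x.primeFactors.filter (fun p => k < p)
      = y.primeFactors.filter (fun p => k < p) := by
    ext p
    simp only [Finset.mem_filter, ← Nat.support_factorization, Finsupp.mem_support_iff]
    constructor
    · rintro ⟨h1, h2⟩; exact ⟨by rw [← h p h2]; exact h1, h2⟩
    · rintro ⟨h1, h2⟩; exact ⟨by rw [h p h2]; exact h1, h2⟩
  rw [hset]
  refine Finset.prod_congr rfl fun p hp => ?_
  rw [h p (Finset.mem_filter.mp hp).2]

lemma adj_betaStar {n k x y : ℕ} (h : (GMult n k).Adj x y) :
    betaStar k x = betaStar k y := by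
  obtain ⟨hxy, hx, hy, a, b, ha1, hak, hb1, hbk, hab⟩ := h
  have hx0 : x ≠ 0 := by have := (Finset.mem_Icc.mp hx).1; omega
  have hy0 : y ≠ 0 := by have := (Finset.mem_Icc.mp hy).1; omega
  refine betaStar_congr hx0 hy0 fun p hp => ?_
  have h1 : (a * x).factorization p = (b * y).factorization p := by rw [hab]
  rw [Nat.factorization_mul (by omega) hx0, Nat.factorization_mul (by omega) hy0] at h1
  have ha0 : a.factorization p = 0 := Nat.factorization_eq_zero_of_lt (by omega)
  have hb0 : b.factorization p = 0 := Nat.factorization_eq_zero_of_lt (by omega)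
  simpa [ha0, hb0] using h1

lemma reach_betaStar (n k : ℕ) (hk : 1 ≤ k) :
    ∀ x, x ∈ Finset.Icc 1 n → (GMult n k).Reachable x (betaStar k x) := by
  intro x
  induction x using Nat.strong_induction_on with
  | _ x ih =>
    intro hx
    obtain ⟨hx1, hxn⟩ := Finset.mem_Icc.mp hx
    by_cases hbx : betaStar k x = x
    · rw [hbx]
    · have hsmall : ∃ p ∈ x.primeFactors, ¬ k < p := by
        by_contra hc
        push_neg at hc
        apply hbx
        unfold betaStar
        rw [Finset.filter_true_of_mem hc]
        conv_rhs => rw [← Nat.factorization_prod_pow_eq_self (by omega : x ≠ 0)]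
        rw [Finsupp.prod, Nat.support_factorization]
      obtain ⟨p, hp, hpk⟩ := hsmall
      push_neg at hpk
      have hpp : p.Prime := Nat.prime_of_mem_primeFactors hp
      have hpd : p ∣ x := Nat.dvd_of_mem_primeFactors hp
      set y := x / p with hy
      have hxy : x = p * y := (Nat.mul_div_cancel' hpd).symm
      have hy1 : 1 ≤ y := Nat.one_le_div_iff hpp.pos |>.mpr (Nat.le_of_dvd (by omega) hpd)
      have hylt : y < x := Nat.div_lt_self (by omega) hpp.one_lt
      have hymem : y ∈ Finset.Icc 1 n := Finset.mem_Icc.mpr ⟨hy1, by omega⟩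
      have hbeq : betaStar k x = betaStar k y := by
        refine betaStar_congr (by omega) (by omega) fun q hq => ?_
        rw [hxy, Nat.factorization_mul hpp.pos.ne' (by omega)]
        have : p.factorization q = 0 := Nat.factorization_eq_zero_of_lt (by omega)
        simp [this]
      have hadj : (GMult n k).Adj x y := by
        refine ⟨by omega, hx, hymem, 1, p, le_refl 1, hk, hpp.one_lt.le, hpk, by omega⟩
      rw [hbeq]
      exact hadj.reachable.trans (ih y hylt hymem)

theorem stmt15 (n k : ℕ) (hk : 1 ≤ k) :
    (∀ x ∈ Finset.Icc 1 n, betaStar k x ∈ Finset.Icc 1 n ∧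
        Nat.gcd (betaStar k x) (primesProduct k) = 1) ∧
    ∀ x ∈ Finset.Icc 1 n, ∀ y ∈ Finset.Icc 1 n,
      ((GMult n k).Reachable x y ↔ betaStar k x = betaStar k y) := by
  constructor
  · intro x hx
    obtain ⟨hx1, hxn⟩ := Finset.mem_Icc.mp hx
    have hd := betaStar_dvd k x
    have hpos : 0 < betaStar k x := Nat.pos_of_dvd_of_pos hd (by omega)
    exact ⟨Finset.mem_Icc.mpr ⟨hpos, le_trans (Nat.le_of_dvd (by omega) hd) hxn⟩,
      betaStar_coprime k x⟩
  · intro x hx y hy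
    constructor
    · intro h
      clear hx hy
      obtain ⟨w⟩ := h
      induction w with
      | nil => rfl
      | cons h _ ih => exact (adj_betaStar h).trans ih
    · intro h
      have h1 := reach_betaStar n k hk x hx
      have h2 := reach_betaStar n k hk y hy
      rw [h] at h1
      exact h1.trans h2.symm
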